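/- Under the splitting assumptions (A SPD, S SPD, B, C full row rank, 2S ≻ BA⁻¹Bᵀ), every eigenvalue of 𝒢 = 𝒫⁻¹ℛ is real and every nonzero eigenvalue λ has the form λ = 1 - (y* B A⁻¹ Bᵀ y)/(y* S y) for some nonzero y ∈ null(C). -/

import Mathlib

open Matrix

noncomputable section

abbrev cm {α β : Type*} (M : Matrix α β ℝ) : Matrix α β ℂ :=
  M.map (fun x : ℝ => (x : ℂ))

lemma cm_eq {α β : Type*} (M : Matrix α β ℝ) :
    cm M = M.map (Complex.ofRealHom : ℝ →+* ℂ) := rfl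

lemma cm_neg {α β : Type*} (M : Matrix α β ℝ) : cm (-M) = -(cm M) := by
  ext i j; simp [Matrix.map_apply]

lemma cm_transpose {α β : Type*} (M : Matrix α β ℝ) : cm (Mᵀ) = (cm M)ᵀ := by
  ext i j; simp [Matrix.map_apply]

lemma cm_mulVec_star {p q : ℕ} (M : Matrix (Fin p) (Fin q) ℝ) (w : Fin q → ℂ) :
    cm M *ᵥ star w = star (cm M *ᵥ w) := by
  funext j
  simp [Matrix.mulVec, dotProduct, star_sum, star_mul', Complex.conj_ofReal, mul_comm]

lemma cm_mul {α β γ : Type*} [Fintype β] (M : Matrix α β ℝ) (N : Matrix β γ ℝ) :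
    cm (M * N) = cm M * cm N := by
  rw [cm_eq, cm_eq, cm_eq, Matrix.map_mul]

lemma cm_det {α : Type*} [Fintype α] [DecidableEq α] (M : Matrix α α ℝ) : (cm M).det = (M.det : ℂ) := by
  rw [cm_eq, ← RingHom.mapMatrix_apply, ← RingHom.map_det]; rfl

lemma cm_inv {α : Type*} [Fintype α] [DecidableEq α] (M : Matrix α α ℝ) : cm M⁻¹ = (cm M)⁻¹ := by
  have hadj : (M.adjugate).map (Complex.ofRealHom : ℝ →+* ℂ) = (cm M).adjugate := by
    rw [cm_eq, ← RingHom.mapMatrix_apply, ← RingHom.mapMatrix_apply, RingHom.map_adjugate]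
  rw [Matrix.inv_def, Matrix.inv_def, cm_det, ← hadj]
  ext i j
  simp [Matrix.map_apply, Ring.inverse_eq_inv']

lemma re_cm_mulVec {p q : ℕ} (M : Matrix (Fin p) (Fin q) ℝ) (z : Fin q → ℂ) (j : Fin p) :
    ((cm M *ᵥ z) j).re = (M *ᵥ fun i => (z i).re) j := by
  simp [Matrix.mulVec, dotProduct, Complex.re_sum, Complex.re_ofReal_mul]

lemma im_cm_mulVec {p q : ℕ} (M : Matrix (Fin p) (Fin q) ℝ) (z : Fin q → ℂ) (j : Fin p) :
    ((cm M *ᵥ z) j).im = (M *ᵥ fun i => (z i).im) j := by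
  simp [Matrix.mulVec, dotProduct, Complex.im_sum, Complex.im_ofReal_mul]

lemma cm_mulVec_zero {p q : ℕ} (M : Matrix (Fin p) (Fin q) ℝ) (z : Fin q → ℂ)
    (h : cm M *ᵥ z = 0) :
    (M *ᵥ fun i => (z i).re) = 0 ∧ (M *ᵥ fun i => (z i).im) = 0 := by
  constructor <;> funext j
  · rw [← re_cm_mulVec, h]; simp
  · rw [← im_cm_mulVec, h]; simp

lemma quad_re {p : ℕ} (M : Matrix (Fin p) (Fin p) ℝ) (z : Fin p → ℂ) :
    (star z ⬝ᵥ (cm M *ᵥ z)).re =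
      (fun i => (z i).re) ⬝ᵥ (M *ᵥ fun i => (z i).re) +
      (fun i => (z i).im) ⬝ᵥ (M *ᵥ fun i => (z i).im) := by
  simp only [dotProduct, Matrix.mulVec, Matrix.map_apply, Pi.star_apply,
    Complex.star_def, Finset.mul_sum, Complex.re_sum, ← Finset.sum_add_distrib]
  refine Finset.sum_congr rfl fun j _ => Finset.sum_congr rfl fun i _ => ?_
  simp [Complex.mul_re]

lemma quad_im {p : ℕ} (M : Matrix (Fin p) (Fin p) ℝ) (hM : Mᵀ = M) (z : Fin p → ℂ) :
    (star z ⬝ᵥ (cm M *ᵥ z)).im = 0 := by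
  have h : (star z ⬝ᵥ (cm M *ᵥ z)).im =
      ∑ j, ∑ i, M j i * ((z j).re * (z i).im - (z j).im * (z i).re) := by
    simp only [dotProduct, Matrix.mulVec, Matrix.map_apply, Pi.star_apply,
      Complex.star_def, Finset.mul_sum, Complex.im_sum]
    refine Finset.sum_congr rfl fun j _ => Finset.sum_congr rfl fun i _ => ?_
    simp [Complex.mul_im]
    ring
  rw [h]
  have hcomm : (∑ j, ∑ i, M j i * ((z j).re * (z i).im - (z j).im * (z i).re)) =
      -∑ j, ∑ i, M j i * ((z j).re * (z i).im - (z j).im * (z i).re) := by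
    calc (∑ j, ∑ i, M j i * ((z j).re * (z i).im - (z j).im * (z i).re))
        = ∑ i, ∑ j, M j i * ((z j).re * (z i).im - (z j).im * (z i).re) := Finset.sum_comm
      _ = ∑ i, ∑ j, -(M i j * ((z i).re * (z j).im - (z i).im * (z j).re)) := by
          refine Finset.sum_congr rfl fun i _ => Finset.sum_congr rfl fun j _ => ?_
          have hji : M j i = M i j := (Matrix.transpose_apply M i j).symm.trans (congrFun (congrFun hM i) j)
          rw [hji]; ring
      _ = -∑ i, ∑ j, M i j * ((z i).re * (z j).im - (z i).im * (z j).re) := by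
          simp [Finset.sum_neg_distrib]
  linarith

lemma transpose_mulVec_inj {p q : ℕ} (C : Matrix (Fin p) (Fin q) ℝ) (hC : C.rank = p)
    {z : Fin p → ℝ} (h : Cᵀ *ᵥ z = 0) : z = 0 := by
  have h1 : Cᵀ.rank = p := by rw [Matrix.rank_transpose]; exact hC
  have h2 : LinearMap.ker (Cᵀ.mulVecLin) = ⊥ := by
    have h3 := Cᵀ.mulVecLin.finrank_range_add_finrank_ker
    have hr : Matrix.rank Cᵀ = Module.finrank ℝ (LinearMap.range Cᵀ.mulVecLin) := rfl
    rw [← hr, h1, Module.finrank_pi, Fintype.card_fin] at h3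
    have h4 : Module.finrank ℝ (LinearMap.ker Cᵀ.mulVecLin) = 0 := by omega
    exact Submodule.finrank_eq_zero.mp h4
  have : z ∈ LinearMap.ker Cᵀ.mulVecLin := by
    rw [LinearMap.mem_ker, Matrix.mulVecLin_apply]; exact h
  rw [h2] at this
  exact Submodule.mem_bot ℝ |>.mp this

lemma quad_pos {p : ℕ} {M : Matrix (Fin p) (Fin p) ℝ} (hM : M.PosDef) {z : Fin p → ℂ}
    (hz : z ≠ 0) : 0 < (star z ⬝ᵥ (cm M *ᵥ z)).re := by
  rw [quad_re]
  have hre : ∀ w : Fin p → ℝ, 0 ≤ w ⬝ᵥ (M *ᵥ w) := by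
    intro w
    rcases eq_or_ne w 0 with hw | hw
    · simp [hw]
    · have := hM.dotProduct_mulVec_pos hw
      simpa using this.le
  have : (fun i => (z i).re) ≠ 0 ∨ (fun i => (z i).im) ≠ 0 := by
    by_contra hcon
    push_neg at hcon
    apply hz
    funext i
    have h1 := congrFun hcon.1 i
    have h2 := congrFun hcon.2 i
    simp only [Pi.zero_apply] at h1 h2 ⊢
    exact Complex.ext h1 h2
  rcases this with hw | hw
  · have := hM.dotProduct_mulVec_pos hw
    have h2 := hre (fun i => (z i).im)
    simp only [star_trivial] at this
    linarith
  · have := hM.dotProduct_mulVec_pos hw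
    have h2 := hre (fun i => (z i).re)
    simp only [star_trivial] at this
    linarith

lemma inv_mulVec_cancel {α : Type*} [Fintype α] [DecidableEq α] {M : Matrix α α ℂ} (h : IsUnit M.det)
    {w : α → ℂ} (hw : M *ᵥ w = 0) : w = 0 := by
  have : M⁻¹ *ᵥ (M *ᵥ w) = w := by
    rw [Matrix.mulVec_mulVec, Matrix.nonsing_inv_mul M h, Matrix.one_mulVec]
  rw [hw, Matrix.mulVec_zero] at this
  exact this.symm

lemma Q_isUnit_det {m l : ℕ} (S : Matrix (Fin m) (Fin m) ℝ) (C : Matrix (Fin l) (Fin m) ℝ)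
    (hS : S.PosDef) (hC : C.rank = l) :
    IsUnit (fromBlocks S (-Cᵀ) C (0 : Matrix (Fin l) (Fin l) ℝ)).det := by
  rw [← Matrix.isUnit_iff_isUnit_det, ← Matrix.mulVec_injective_iff_isUnit]
  have hker : ∀ u : Fin m ⊕ Fin l → ℝ,
      fromBlocks S (-Cᵀ) C (0 : Matrix (Fin l) (Fin l) ℝ) *ᵥ u = 0 → u = 0 := by
    intro u hu
    rw [Matrix.fromBlocks_mulVec] at hu
    have h1 : S *ᵥ (u ∘ Sum.inl) + (-Cᵀ) *ᵥ (u ∘ Sum.inr) = 0 :=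
      funext fun i => congrFun hu (Sum.inl i)
    have h2 : C *ᵥ (u ∘ Sum.inl) + 0 *ᵥ (u ∘ Sum.inr) = 0 :=
      funext fun i => congrFun hu (Sum.inr i)
    have hCy : C *ᵥ (u ∘ Sum.inl) = 0 := by simpa using h2
    have hS' : S *ᵥ (u ∘ Sum.inl) = Cᵀ *ᵥ (u ∘ Sum.inr) := by
      rw [Matrix.neg_mulVec] at h1
      have := sub_eq_zero.mp (by simpa [sub_eq_add_neg] using h1)
      exact this
    have hq : (u ∘ Sum.inl) ⬝ᵥ (S *ᵥ (u ∘ Sum.inl)) = 0 := by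
      rw [hS', Matrix.dotProduct_mulVec, Matrix.vecMul_transpose, hCy, zero_dotProduct]
    have hy : (u ∘ Sum.inl) = 0 := by
      by_contra hy
      have := hS.dotProduct_mulVec_pos hy
      rw [star_trivial, hq] at this
      exact lt_irrefl 0 this
    have hz : (u ∘ Sum.inr) = 0 := by
      apply transpose_mulVec_inj C hC
      rw [← hS', hy, Matrix.mulVec_zero]
    funext i
    cases i with
    | inl i => exact congrFun hy i
    | inr i => exact congrFun hz i
  intro u1 u2 h12
  have : fromBlocks S (-Cᵀ) C (0 : Matrix (Fin l) (Fin l) ℝ) *ᵥ (u1 - u2) = 0 := by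
    rw [Matrix.mulVec_sub, h12, sub_self]
  have := hker _ this
  exact sub_eq_zero.mp this

/-- 3×3 block matrix with blocks of sizes n, m, l. -/
def blk3 {n m l : ℕ} (M11 : Matrix (Fin n) (Fin n) ℝ) (M12 : Matrix (Fin n) (Fin m) ℝ)
    (M13 : Matrix (Fin n) (Fin l) ℝ) (M21 : Matrix (Fin m) (Fin n) ℝ)
    (M22 : Matrix (Fin m) (Fin m) ℝ) (M23 : Matrix (Fin m) (Fin l) ℝ)
    (M31 : Matrix (Fin l) (Fin n) ℝ) (M32 : Matrix (Fin l) (Fin m) ℝ)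
    (M33 : Matrix (Fin l) (Fin l) ℝ) :
    Matrix (Fin n ⊕ (Fin m ⊕ Fin l)) (Fin n ⊕ (Fin m ⊕ Fin l)) ℝ :=
  fromBlocks M11 (fromCols M12 M13) (fromRows M21 M31) (fromBlocks M22 M23 M32 M33)

lemma cm_blk3 {n m l : ℕ} (M11 : Matrix (Fin n) (Fin n) ℝ) (M12 : Matrix (Fin n) (Fin m) ℝ)
    (M13 : Matrix (Fin n) (Fin l) ℝ) (M21 : Matrix (Fin m) (Fin n) ℝ)
    (M22 : Matrix (Fin m) (Fin m) ℝ) (M23 : Matrix (Fin m) (Fin l) ℝ)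
    (M31 : Matrix (Fin l) (Fin n) ℝ) (M32 : Matrix (Fin l) (Fin m) ℝ)
    (M33 : Matrix (Fin l) (Fin l) ℝ) :
    cm (blk3 M11 M12 M13 M21 M22 M23 M31 M32 M33) =
      fromBlocks (cm M11) (fromCols (cm M12) (cm M13)) (fromRows (cm M21) (cm M31))
        (fromBlocks (cm M22) (cm M23) (cm M32) (cm M33)) := by
  ext (i | i | i) (j | j | j) <;>
    simp [blk3, Matrix.map_apply, Matrix.fromBlocks, Matrix.fromCols, Matrix.fromRows] <;>
    rfl

lemma P_isUnit_det {n m l : ℕ} (A : Matrix (Fin n) (Fin n) ℝ) (B : Matrix (Fin m) (Fin n) ℝ)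
    (S : Matrix (Fin m) (Fin m) ℝ) (C : Matrix (Fin l) (Fin m) ℝ)
    (hA : A.PosDef) (hS : S.PosDef) (hC : C.rank = l) :
    IsUnit (blk3 A Bᵀ 0 0 S (-Cᵀ) 0 C 0).det := by
  unfold blk3
  rw [Matrix.fromRows_zero, Matrix.det_fromBlocks_zero₂₁]
  exact (isUnit_iff_ne_zero.mpr hA.det_pos.ne').mul (Q_isUnit_det S C hS hC)

/-- μ ∈ ℂ is an eigenvalue of the real matrix M (viewed over ℂ). -/
def IsEig {k : Type*} [Fintype k] (M : Matrix k k ℝ) (μ : ℂ) : Prop :=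
  ∃ v : k → ℂ, v ≠ 0 ∧ (M.map (fun x : ℝ => (x : ℂ))) *ᵥ v = μ • v

theorem stmt5 {n m l : ℕ} (A : Matrix (Fin n) (Fin n) ℝ) (B : Matrix (Fin m) (Fin n) ℝ)
    (S : Matrix (Fin m) (Fin m) ℝ) (C : Matrix (Fin l) (Fin m) ℝ)
    (hA : A.PosDef) (hS : S.PosDef) (hB : B.rank = m) (hC : C.rank = l)
    (h2 : ((2 : ℝ) • S - B * A⁻¹ * Bᵀ).PosDef) :
    ∀ μ : ℂ, IsEig ((blk3 A Bᵀ 0 0 S (-Cᵀ) 0 C 0)⁻¹ * blk3 0 0 0 B S 0 0 0 0) μ →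
      μ.im = 0 ∧ (μ ≠ 0 → ∃ y : Fin m → ℂ, y ≠ 0 ∧
        (C.map (fun x : ℝ => (x : ℂ))) *ᵥ y = 0 ∧
        μ = 1 - (star y ⬝ᵥ ((B * A⁻¹ * Bᵀ).map (fun x : ℝ => (x : ℂ)) *ᵥ y)) /
                (star y ⬝ᵥ (S.map (fun x : ℝ => (x : ℂ)) *ᵥ y))) := by
  rintro μ ⟨v, hv0, hv⟩
  set Pb := blk3 A Bᵀ 0 0 S (-Cᵀ) 0 C 0 with hPb
  set Rb := blk3 0 0 0 B S 0 0 0 0 with hRb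
  have hPdet : IsUnit Pb.det := P_isUnit_det A B S C hA hS hC
  have hPcdet : IsUnit (cm Pb).det := by
    rw [cm_det]
    exact isUnit_iff_ne_zero.mpr (by exact_mod_cast hPdet.ne_zero)
  have hmap : (Pb⁻¹ * Rb).map (fun x : ℝ => (x : ℂ)) = (cm Pb)⁻¹ * cm Rb := by
    rw [show (Pb⁻¹ * Rb).map (fun x : ℝ => (x : ℂ)) = cm (Pb⁻¹ * Rb) from rfl, cm_mul, cm_inv]
  have key : cm Rb *ᵥ v = μ • (cm Pb *ᵥ v) := by
    rw [hmap] at hv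
    have h := congrArg (fun w => cm Pb *ᵥ w) hv
    simp only [Matrix.mulVec_mulVec, ← Matrix.mul_assoc,
      Matrix.mul_nonsing_inv _ hPcdet, Matrix.one_mul, Matrix.mulVec_smul] at h
    exact h
  set x : Fin n → ℂ := v ∘ Sum.inl with hx
  set y : Fin m → ℂ := (fun i => v (Sum.inr (Sum.inl i))) with hy
  set z : Fin l → ℂ := (fun i => v (Sum.inr (Sum.inr i))) with hz
  have hw : v ∘ Sum.inr = Sum.elim y z := funext fun i => by cases i <;> rfl
  rw [hPb, hRb, cm_blk3, cm_blk3, Matrix.fromBlocks_mulVec, Matrix.fromBlocks_mulVec] at key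
  simp only [Matrix.map_zero, Complex.ofReal_zero, Matrix.zero_mulVec, Matrix.mulVec_zero,
    hw, Matrix.fromCols_mulVec_sumElim, Matrix.fromRows_mulVec, Matrix.fromBlocks_mulVec,
    zero_add, add_zero, Matrix.fromCols_zero, Sum.elim_comp_inl, Sum.elim_comp_inr] at key
  -- auxiliary facts
  have hST : Sᵀ = S := (Matrix.conjTranspose_eq_transpose_of_trivial S).symm.trans hS.1
  have hAT : Aᵀ = A := (Matrix.conjTranspose_eq_transpose_of_trivial A).symm.trans hA.1
  have hTT : (B * A⁻¹ * Bᵀ)ᵀ = B * A⁻¹ * Bᵀ := by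
    rw [Matrix.transpose_mul, Matrix.transpose_mul, Matrix.transpose_transpose,
      Matrix.transpose_nonsing_inv, hAT, Matrix.mul_assoc]
  have hAcdet : IsUnit (cm A).det := by
    rw [cm_det]
    exact isUnit_iff_ne_zero.mpr (by exact_mod_cast hA.det_pos.ne')
  -- component equations
  have e1 : ∀ i, μ * ((cm A *ᵥ x) i + (cm Bᵀ *ᵥ y) i) = 0 := by
    intro i
    have h := congrFun key (Sum.inl i)
    simp only [Sum.elim_inl, Sum.elim_inr, Pi.add_apply, Pi.smul_apply, Pi.zero_apply,
      smul_eq_mul] at h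
    linear_combination -h
  have e2 : ∀ i, (cm B *ᵥ x) i + (cm S *ᵥ y) i = μ * ((cm S *ᵥ y) i - (cm Cᵀ *ᵥ z) i) := by
    intro i
    have h := congrFun key (Sum.inr (Sum.inl i))
    simp only [Sum.elim_inl, Sum.elim_inr, Pi.add_apply, Pi.smul_apply, Pi.zero_apply,
      smul_eq_mul, cm_neg, Matrix.neg_mulVec, Pi.neg_apply] at h
    linear_combination h
  have e3 : ∀ i, μ * (cm C *ᵥ y) i = 0 := by
    intro i
    have h := congrFun key (Sum.inr (Sum.inr i))
    simp only [Sum.elim_inl, Sum.elim_inr, Pi.add_apply, Pi.smul_apply, Pi.zero_apply,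
      smul_eq_mul] at h
    linear_combination -h
  rcases eq_or_ne μ 0 with hμ | hμ
  · exact ⟨by simp [hμ], fun h => absurd hμ h⟩
  have hCy : cm C *ᵥ y = 0 := by
    funext i
    rcases mul_eq_zero.mp (e3 i) with h | h
    · exact absurd h hμ
    · simpa using h
  have hABy : cm A *ᵥ x + cm Bᵀ *ᵥ y = 0 := by
    funext i
    rcases mul_eq_zero.mp (e1 i) with h | h
    · exact absurd h hμ
    · simpa using h
  have hy0 : y ≠ 0 := by
    intro hyz
    have hax : cm A *ᵥ x = 0 := by
      have := hABy
      rw [hyz, Matrix.mulVec_zero, add_zero] at this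
      exact this
    have hx0 : x = 0 := inv_mulVec_cancel hAcdet hax
    have hz0 : z = 0 := by
      have hCz : cm Cᵀ *ᵥ z = 0 := by
        funext i
        have h5 := e2 i
        rw [hx0, hyz] at h5
        simp only [Matrix.mulVec_zero, Pi.zero_apply, add_zero, zero_add, zero_sub,
          Pi.neg_apply, mul_neg] at h5
        rw [eq_comm, neg_eq_zero] at h5
        have h9 : μ * (cm Cᵀ *ᵥ z) i = 0 := h5
        rcases mul_eq_zero.mp h9 with h | h
        · exact absurd h hμ
        · simpa using h
      obtain ⟨hre, him⟩ := cm_mulVec_zero Cᵀ z hCz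
      have hr1 := transpose_mulVec_inj C hC hre
      have hr2 := transpose_mulVec_inj C hC him
      funext i
      exact Complex.ext (congrFun hr1 i) (congrFun hr2 i)
    apply hv0
    funext i
    rcases i with i | i | i
    · exact congrFun hx0 i
    · exact congrFun hyz i
    · exact congrFun hz0 i
  have hxe : cm B *ᵥ x = -(cm (B * A⁻¹ * Bᵀ) *ᵥ y) := by
    have hax : cm A *ᵥ x = -(cm Bᵀ *ᵥ y) := eq_neg_of_add_eq_zero_left hABy
    have hxx : x = (cm A)⁻¹ *ᵥ (-(cm Bᵀ *ᵥ y)) := by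
      rw [← hax, Matrix.mulVec_mulVec, Matrix.nonsing_inv_mul _ hAcdet, Matrix.one_mulVec]
    rw [hxx, cm_mul, cm_mul, cm_inv]
    rw [Matrix.mulVec_neg, Matrix.mulVec_neg, Matrix.mulVec_mulVec, Matrix.mulVec_mulVec]
  have e2v : cm B *ᵥ x + cm S *ᵥ y = μ • (cm S *ᵥ y - cm Cᵀ *ᵥ z) := by
    funext i
    simp only [Pi.add_apply, Pi.smul_apply, Pi.sub_apply, smul_eq_mul]
    linear_combination e2 i
  have hdot := congrArg (fun w => star y ⬝ᵥ w) e2v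
  simp only [dotProduct_add, dotProduct_smul, dotProduct_sub,
    smul_eq_mul] at hdot
  have hCz0 : star y ⬝ᵥ (cm Cᵀ *ᵥ z) = 0 := by
    rw [cm_transpose, Matrix.dotProduct_mulVec, Matrix.vecMul_transpose, cm_mulVec_star,
      hCy, star_zero, zero_dotProduct]
  rw [hxe, dotProduct_neg, hCz0, sub_zero] at hdot
  set qS := star y ⬝ᵥ (cm S *ᵥ y) with hqS
  set qT := star y ⬝ᵥ (cm (B * A⁻¹ * Bᵀ) *ᵥ y) with hqT
  have hqSim : qS.im = 0 := quad_im S hST y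
  have hqTim : qT.im = 0 := quad_im _ hTT y
  have hqSre : 0 < qS.re := quad_pos hS hy0
  have hqS0 : qS ≠ 0 := fun h => by rw [h] at hqSre; simp at hqSre
  have hμeq : μ = 1 - qT / qS := by
    field_simp
    linear_combination -hdot
  have hμim : μ.im = 0 := by
    have hqs : qS = (qS.re : ℂ) := Complex.ext rfl (by simp [hqSim])
    have hqt : qT = (qT.re : ℂ) := Complex.ext rfl (by simp [hqTim])
    rw [hμeq, hqs, hqt, ← Complex.ofReal_div]
    simp
  exact ⟨hμim, fun _ => ⟨y, hy0, hCy, hμeq⟩⟩
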